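/- Let P = [a,b,c], Q = [a',b',c'] be binary forms of discriminant D with contents δ = gcd(a,b,c), δ' = gcd(a',b',c'), and λ = gcd(δ,δ'). Then the rank-2 lattice Λ(P,Q) has discriminant D/λ². -/

import Mathlib

/-- The binary quadratic form `[a,b,c]` identified with the even symmetric matrix
`[[2a, b], [b, 2c]]`. -/
def formMatrix (a b c : ℤ) : Matrix (Fin 2) (Fin 2) ℤ := !![2 * a, b; b, 2 * c]

/-- `Λ(P,Q) = { X ∈ M₂(ℤ) | Xᵀ P = Q Xᴬ }`, where `Xᴬ` is the adjugate. -/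
def LambdaSet (P Q : Matrix (Fin 2) (Fin 2) ℤ) : Set (Matrix (Fin 2) (Fin 2) ℤ) :=
  {X | X.transpose * P = Q * X.adjugate}

/-- The bilinear form on `M₂(ℤ)` associated to the quadratic form `2·det`. -/
def detBil (X Y : Matrix (Fin 2) (Fin 2) ℤ) : ℤ := (X + Y).det - X.det - Y.det

/-- The content `gcd(a,b,c)` of the binary form `[a,b,c]`. -/
def content (a b c : ℤ) : ℕ := Int.gcd (Int.gcd a b) c

lemma adj_add (X Y : Matrix (Fin 2) (Fin 2) ℤ) :
    (X + Y).adjugate = X.adjugate + Y.adjugate := by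
  ext i j
  rw [Matrix.adjugate_fin_two, Matrix.adjugate_fin_two, Matrix.adjugate_fin_two]
  fin_cases i <;> fin_cases j <;> simp [Matrix.add_apply] <;> ring

lemma adj_smul (r : ℤ) (X : Matrix (Fin 2) (Fin 2) ℤ) :
    (r • X).adjugate = r • X.adjugate := by
  rw [Matrix.adjugate_smul]
  norm_num

def lambdaSub (P Q : Matrix (Fin 2) (Fin 2) ℤ) : Submodule ℤ (Matrix (Fin 2) (Fin 2) ℤ) where
  carrier := LambdaSet P Q
  add_mem' := by
    intro X Y hX hY
    simp only [LambdaSet, Set.mem_setOf_eq] at hX hY ⊢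
    rw [Matrix.transpose_add, Matrix.add_mul, hX, hY, adj_add, Matrix.mul_add]
  zero_mem' := by
    simp only [LambdaSet, Set.mem_setOf_eq]
    rw [Matrix.transpose_zero, Matrix.zero_mul, Matrix.adjugate_zero, Matrix.mul_zero]
  smul_mem' := by
    intro r X hX
    simp only [LambdaSet, Set.mem_setOf_eq] at hX ⊢
    rw [Matrix.transpose_smul, Matrix.smul_mul, hX, adj_smul, Matrix.mul_smul]

lemma coe_lambdaSub (P Q : Matrix (Fin 2) (Fin 2) ℤ) :
    (lambdaSub P Q : Set (Matrix (Fin 2) (Fin 2) ℤ)) = LambdaSet P Q := rfl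

lemma span_lambda (P Q : Matrix (Fin 2) (Fin 2) ℤ) :
    Submodule.span ℤ (LambdaSet P Q) = lambdaSub P Q := by
  rw [← coe_lambdaSub]
  exact Submodule.span_eq (lambdaSub P Q)

lemma divide_mem (P Q : Matrix (Fin 2) (Fin 2) ℤ) (Z : Matrix (Fin 2) (Fin 2) ℤ)
    (hZ : Z ∈ LambdaSet P Q) (ρ : ℤ) (hρ : ρ ≠ 0) (hd : ∀ i j, ρ ∣ Z i j) :
    ∃ Z', Z = ρ • Z' ∧ Z' ∈ LambdaSet P Q := by
  refine ⟨Matrix.of (fun i j => Z i j / ρ), ?_, ?_⟩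
  · ext i j
    simp only [Matrix.smul_apply, Matrix.of_apply, smul_eq_mul]
    exact (Int.mul_ediv_cancel' (hd i j)).symm
  · have hZfac : Z = ρ • Matrix.of (fun i j => Z i j / ρ) := by
      ext i j
      simp only [Matrix.smul_apply, Matrix.of_apply, smul_eq_mul]
      exact (Int.mul_ediv_cancel' (hd i j)).symm
    have h : Z.transpose * P = Q * Z.adjugate := hZ
    rw [hZfac] at h
    rw [Matrix.transpose_smul, Matrix.smul_mul, adj_smul, Matrix.mul_smul] at h
    exact smul_right_injective (Matrix (Fin 2) (Fin 2) ℤ) hρ h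

lemma bez (m n : ℤ) : ∃ x y : ℤ, m*x + n*y = ↑(Int.gcd m n) :=
  ⟨Int.gcdA m n, Int.gcdB m n, (Int.gcd_eq_gcd_ab m n).symm⟩

lemma content_cast_dvd (a b c : ℤ) :
    ((content a b c : ℤ) ∣ a) ∧ ((content a b c : ℤ) ∣ b) ∧ ((content a b c : ℤ) ∣ c) := by
  refine ⟨?_, ?_, (Int.gcd_dvd_right _ _)⟩
  · exact dvd_trans (Int.gcd_dvd_left _ _) (Int.gcd_dvd_left _ _)
  · exact dvd_trans (Int.gcd_dvd_left _ _) (Int.gcd_dvd_right _ _)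

lemma pair_indep (M : Submodule ℤ (Matrix (Fin 2) (Fin 2) ℤ)) (bas : Module.Basis (Fin 2) ℤ ↥M)
    (g0 g1 : ℤ)
    (h : g0 • ((bas 0 : ↥M) : Matrix (Fin 2) (Fin 2) ℤ) + g1 • ((bas 1 : ↥M) : Matrix (Fin 2) (Fin 2) ℤ) = 0) :
    g0 = 0 ∧ g1 = 0 := by
  have li := bas.linearIndependent
  have key := Fintype.linearIndependent_iff.mp li ![g0, g1]
  have hsum : (∑ i, ![g0, g1] i • bas i) = 0 := by
    apply Subtype.coe_injective
    push_cast [Fin.sum_univ_two]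
    simpa using h
  exact ⟨key hsum 0, key hsum 1⟩

lemma repr_two (M : Submodule ℤ (Matrix (Fin 2) (Fin 2) ℤ)) (bas : Module.Basis (Fin 2) ℤ ↥M)
    (Z : Matrix (Fin 2) (Fin 2) ℤ) (hZ : Z ∈ M) :
    ∃ r0 r1 : ℤ, Z = r0 • ((bas 0 : ↥M) : Matrix (Fin 2) (Fin 2) ℤ) + r1 • ((bas 1 : ↥M) : Matrix (Fin 2) (Fin 2) ℤ) := by
  have h := bas.sum_repr ⟨Z, hZ⟩
  refine ⟨bas.repr ⟨Z, hZ⟩ 0, bas.repr ⟨Z, hZ⟩ 1, ?_⟩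
  have h2 := congrArg (Subtype.val) h
  push_cast [Fin.sum_univ_two] at h2
  exact h2.symm

set_option maxHeartbeats 2000000 in
/-- For non-degenerate binary forms `P = [a,b,c]`, `Q = [a',b',c']` of the same discriminant
`D`, with contents `δ`, `δ'` and `λ = gcd(δ,δ')`, the rank-2 lattice `Λ(P,Q)` has
discriminant `D/λ²`.  (The discriminant of a rank-2 even lattice with Gram matrix
`[[2α,β],[β,2γ]]` is `β² - 4αγ = -det`.) -/
theorem stmt16 (a b c a' b' c' : ℤ) (hP : b ^ 2 - 4 * a * c ≠ 0)
    (hQ : b' ^ 2 - 4 * a' * c' ≠ 0)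
    (hsame : b ^ 2 - 4 * a * c = b' ^ 2 - 4 * a' * c') :
    ∀ bas : Module.Basis (Fin 2) ℤ
        ↥(Submodule.span ℤ (LambdaSet (formMatrix a b c) (formMatrix a' b' c'))),
      -(Matrix.det (Matrix.of fun i j => detBil ↑(bas i) ↑(bas j))) =
        (b ^ 2 - 4 * a * c) /
          ((Nat.gcd (content a b c) (content a' b' c') : ℤ)) ^ 2 := by
  intro bas
  set L : ℕ := Nat.gcd (content a b c) (content a' b' c') with hL
  set lam : ℤ := (L : ℤ) with hlamdef
  have hda : lam ∣ a := dvd_trans (Int.natCast_dvd_natCast.mpr (Nat.gcd_dvd_left _ _)) (content_cast_dvd a b c).1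
  have hdb : lam ∣ b := dvd_trans (Int.natCast_dvd_natCast.mpr (Nat.gcd_dvd_left _ _)) (content_cast_dvd a b c).2.1
  have hdc : lam ∣ c := dvd_trans (Int.natCast_dvd_natCast.mpr (Nat.gcd_dvd_left _ _)) (content_cast_dvd a b c).2.2
  have hda' : lam ∣ a' := dvd_trans (Int.natCast_dvd_natCast.mpr (Nat.gcd_dvd_right _ _)) (content_cast_dvd a' b' c').1
  have hdb' : lam ∣ b' := dvd_trans (Int.natCast_dvd_natCast.mpr (Nat.gcd_dvd_right _ _)) (content_cast_dvd a' b' c').2.1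
  have hdc' : lam ∣ c' := dvd_trans (Int.natCast_dvd_natCast.mpr (Nat.gcd_dvd_right _ _)) (content_cast_dvd a' b' c').2.2
  have hlam0 : lam ≠ 0 := by
    intro h
    have hL0 : L = 0 := by rw [hlamdef] at h; exact_mod_cast h
    have h1 : content a b c = 0 := Nat.eq_zero_of_gcd_eq_zero_left hL0
    have h2 : (Int.gcd a b : ℤ) = 0 ∧ c = 0 := by
      have := Int.gcd_eq_zero_iff.mp h1
      exact_mod_cast this
    have h3 : a = 0 ∧ b = 0 := Int.gcd_eq_zero_iff.mp (by exact_mod_cast h2.1)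
    apply hP
    rw [h3.1, h3.2, h2.2]; ring
  obtain ⟨A1, hA1⟩ := hda
  obtain ⟨B1, hB1⟩ := hdb
  obtain ⟨C1, hC1⟩ := hdc
  obtain ⟨A2, hA2⟩ := hda'
  obtain ⟨B2, hB2⟩ := hdb'
  obtain ⟨C2, hC2⟩ := hdc'
  have hpar : B1^2 - 4*A1*C1 = B2^2 - 4*A2*C2 := by
    have h2 : lam^2 * (B1^2 - 4*A1*C1) = lam^2 * (B2^2 - 4*A2*C2) := by
      rw [hA1, hB1, hC1, hA2, hB2, hC2] at hsame
      linear_combination hsame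
    exact mul_left_cancel₀ (pow_ne_zero 2 hlam0) h2
  have heven : (2:ℤ) ∣ (B2 - B1) := by
    rcases Int.even_or_odd (B2 - B1) with he | ho
    · exact he.two_dvd
    · exfalso
      have ho2 : Odd (B2 + B1) := by
        obtain ⟨k, hk⟩ := ho
        exact ⟨k + B1, by linarith⟩
      have hodd : Odd ((B2 - B1)*(B2 + B1)) := ho.mul ho2
      have heven2 : Even ((B2 - B1)*(B2 + B1)) := by
        refine ⟨2*(A2*C2 - A1*C1), ?_⟩
        linear_combination -hpar
      exact (Int.not_odd_iff_even.mpr heven2) hodd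
  obtain ⟨dd, hdd⟩ := heven
  have hb' : b' = b + 2*(lam*dd) := by
    rw [hB2, hB1]
    linear_combination lam * hdd
  have hRq : A1*C1 + B1*dd + dd*dd - A2*C2 = 0 := by
    have hB2' : B2 = B1 + 2*dd := by linarith
    have h4 : (4:ℤ) * (A1*C1 + B1*dd + dd*dd - A2*C2) = 4 * 0 := by
      rw [hB2'] at hpar
      linear_combination -hpar
    exact mul_left_cancel₀ (by norm_num : (4:ℤ) ≠ 0) h4
  set g : ℕ := Int.gcd C1 (Int.gcd A2 (Int.gcd (B1+dd) (Int.gcd dd (Int.gcd C2 A1)))) with hgdef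
  have hg1 : (g:ℤ) ∣ C1 := (Int.gcd_dvd_left _ _)
  have hg2 : (g:ℤ) ∣ A2 := dvd_trans (Int.gcd_dvd_right _ _) (Int.gcd_dvd_left _ _)
  have hg3 : (g:ℤ) ∣ (B1+dd) := dvd_trans (Int.gcd_dvd_right _ _) (dvd_trans (Int.gcd_dvd_right _ _) (Int.gcd_dvd_left _ _))
  have hg4 : (g:ℤ) ∣ dd := dvd_trans (Int.gcd_dvd_right _ _) (dvd_trans (Int.gcd_dvd_right _ _) (dvd_trans (Int.gcd_dvd_right _ _) (Int.gcd_dvd_left _ _)))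
  have hg5 : (g:ℤ) ∣ C2 := dvd_trans (Int.gcd_dvd_right _ _) (dvd_trans (Int.gcd_dvd_right _ _) (dvd_trans (Int.gcd_dvd_right _ _) (dvd_trans (Int.gcd_dvd_right _ _) (Int.gcd_dvd_left _ _))))
  have hg6 : (g:ℤ) ∣ A1 := dvd_trans (Int.gcd_dvd_right _ _) (dvd_trans (Int.gcd_dvd_right _ _) (dvd_trans (Int.gcd_dvd_right _ _) (dvd_trans (Int.gcd_dvd_right _ _) (Int.gcd_dvd_right _ _))))
  have hgB1 : (g:ℤ) ∣ B1 := by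
    have := dvd_sub hg3 hg4
    simpa using this
  have hgB2 : (g:ℤ) ∣ B2 := by
    have hB2' : B2 = (B1 + dd) + dd := by linarith
    rw [hB2']
    exact dvd_add hg3 hg4
  have hd1 : ((L*g:ℕ):ℤ) ∣ a := by push_cast; rw [hA1]; exact mul_dvd_mul_left lam hg6
  have hd2 : ((L*g:ℕ):ℤ) ∣ b := by push_cast; rw [hB1]; exact mul_dvd_mul_left lam hgB1
  have hd3 : ((L*g:ℕ):ℤ) ∣ c := by push_cast; rw [hC1]; exact mul_dvd_mul_left lam hg1
  have hd4 : ((L*g:ℕ):ℤ) ∣ a' := by push_cast; rw [hA2]; exact mul_dvd_mul_left lam hg2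
  have hd5 : ((L*g:ℕ):ℤ) ∣ b' := by push_cast; rw [hB2]; exact mul_dvd_mul_left lam hgB2
  have hd6 : ((L*g:ℕ):ℤ) ∣ c' := by push_cast; rw [hC2]; exact mul_dvd_mul_left lam hg5
  have hc1 : (L*g : ℕ) ∣ content a b c := by
    have h1 : ((L*g:ℕ):ℤ) ∣ (Int.gcd a b : ℤ) := Int.natCast_dvd_natCast.mpr (Int.dvd_gcd hd1 hd2)
    have h2 : ((L*g:ℕ):ℤ) ∣ (content a b c : ℤ) := Int.natCast_dvd_natCast.mpr (Int.dvd_gcd h1 hd3)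
    exact_mod_cast h2
  have hc2 : (L*g : ℕ) ∣ content a' b' c' := by
    have h1 : ((L*g:ℕ):ℤ) ∣ (Int.gcd a' b' : ℤ) := Int.natCast_dvd_natCast.mpr (Int.dvd_gcd hd4 hd5)
    have h2 : ((L*g:ℕ):ℤ) ∣ (content a' b' c' : ℤ) := Int.natCast_dvd_natCast.mpr (Int.dvd_gcd h1 hd6)
    exact_mod_cast h2
  have hLgN : L * g ∣ L := by
    rw [hL]
    exact Nat.dvd_gcd hc1 hc2
  have hg_one : g = 1 := by
    have hLpos : 0 < L := by
      apply Nat.pos_of_ne_zero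
      intro h
      exact hlam0 (by rw [hlamdef, h]; simp)
    have hg1' : g ∣ 1 := (Nat.mul_dvd_mul_iff_left hLpos).mp (by rwa [Nat.mul_one])
    exact Nat.dvd_one.mp hg1'
  have hbezex : ∃ e1 e2 e3 e4 e5 e6 : ℤ,
      (-C1)*e1 + A2*e2 + (B1+dd)*e3 + dd*e4 + C2*e5 + (-A1)*e6 = 1 := by
    obtain ⟨p5x, p5y, h5⟩ := bez C2 A1
    obtain ⟨p4x, p4y, h4⟩ := bez dd ↑(Int.gcd C2 A1)
    obtain ⟨p3x, p3y, h3⟩ := bez (B1+dd) ↑(Int.gcd dd ↑(Int.gcd C2 A1))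
    obtain ⟨p2x, p2y, h2⟩ := bez A2 ↑(Int.gcd (B1+dd) ↑(Int.gcd dd ↑(Int.gcd C2 A1)))
    obtain ⟨p1x, p1y, h1⟩ := bez C1 ↑(Int.gcd A2 ↑(Int.gcd (B1+dd) ↑(Int.gcd dd ↑(Int.gcd C2 A1))))
    refine ⟨-p1x, p2x*p1y, p3x*p2y*p1y, p4x*p3y*p2y*p1y, p5x*p4y*p3y*p2y*p1y,
      -(p5y*p4y*p3y*p2y*p1y), ?_⟩
    have hg' : ((g:ℕ) : ℤ) = 1 := by rw [hg_one]; norm_num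
    rw [hgdef] at hg'
    linear_combination hg' + h1 + p1y*h2 + p2y*p1y*h3 + p3y*p2y*p1y*h4 + p4y*p3y*p2y*p1y*h5
  -- memberships
  have hle : Submodule.span ℤ (LambdaSet (formMatrix a b c) (formMatrix a' b' c')) ≤
      lambdaSub (formMatrix a b c) (formMatrix a' b' c') :=
    Submodule.span_le.mpr (fun x hx => hx)
  have hmem0 : ((bas 0 : _) : Matrix (Fin 2) (Fin 2) ℤ) ∈ LambdaSet (formMatrix a b c) (formMatrix a' b' c') :=
    hle (bas 0).prop
  have hmem1 : ((bas 1 : _) : Matrix (Fin 2) (Fin 2) ℤ) ∈ LambdaSet (formMatrix a b c) (formMatrix a' b' c') :=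
    hle (bas 1).prop
  set v : Matrix (Fin 2) (Fin 2) ℤ := ((bas 0 : _) : Matrix (Fin 2) (Fin 2) ℤ) with hvdef
  set w : Matrix (Fin 2) (Fin 2) ℤ := ((bas 1 : _) : Matrix (Fin 2) (Fin 2) ℤ) with hwdef
  -- raw entry equations
  have hmv : v.transpose * formMatrix a b c = formMatrix a' b' c' * v.adjugate := hmem0
  have hmw : w.transpose * formMatrix a b c = formMatrix a' b' c' * w.adjugate := hmem1
  have hv00 := congrFun (congrFun hmv 0) 0
  have hv01 := congrFun (congrFun hmv 0) 1
  have hv10 := congrFun (congrFun hmv 1) 0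
  have hv11 := congrFun (congrFun hmv 1) 1
  have hw00 := congrFun (congrFun hmw 0) 0
  have hw01 := congrFun (congrFun hmw 0) 1
  have hw10 := congrFun (congrFun hmw 1) 0
  have hw11 := congrFun (congrFun hmw 1) 1
  simp [Matrix.mul_apply, Fin.sum_univ_two, Matrix.transpose_apply, formMatrix,
    Matrix.adjugate_fin_two] at hv00 hv01 hv10 hv11 hw00 hw01 hw10 hw11
  -- goal massage
  rw [Matrix.det_fin_two]
  simp only [Matrix.of_apply]
  rw [← hvdef, ← hwdef]
  simp only [detBil, Matrix.det_fin_two, Matrix.add_apply]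
  set x1 : ℤ := v 0 0 with hx1def
  set y1 : ℤ := v 0 1 with hy1def
  set z1 : ℤ := v 1 0 with hz1def
  set u1 : ℤ := v 1 1 with hu1def
  set x2 : ℤ := w 0 0 with hx2def
  set y2 : ℤ := w 0 1 with hy2def
  set z2 : ℤ := w 1 0 with hz2def
  set u2 : ℤ := w 1 1 with hu2def
  have hv0r : 2*a*x1 + (b + b')*z1 - 2*a'*u1 = 0 := by linear_combination hv00
  have hv1r : (b - b')*x1 + 2*a'*y1 + 2*c*z1 = 0 := by linear_combination hv01
  have hv2r : 2*a*y1 + 2*c'*z1 + (b - b')*u1 = 0 := by linear_combination hv10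
  have hv3r : -2*c'*x1 + (b + b')*y1 + 2*c*u1 = 0 := by linear_combination hv11
  have hw0r : 2*a*x2 + (b + b')*z2 - 2*a'*u2 = 0 := by linear_combination hw00
  have hw1r : (b - b')*x2 + 2*a'*y2 + 2*c*z2 = 0 := by linear_combination hw01
  have hw2r : 2*a*y2 + 2*c'*z2 + (b - b')*u2 = 0 := by linear_combination hw10
  have hw3r : -2*c'*x2 + (b + b')*y2 + 2*c*u2 = 0 := by linear_combination hw11
  have h2lam : (2*lam) ≠ 0 := mul_ne_zero two_ne_zero hlam0
  have hv0 : A1*x1 + (B1 + dd)*z1 - A2*u1 = 0 := by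
    have hg : (2*lam) * (A1*x1 + (B1 + dd)*z1 - A2*u1) = (2*lam) * 0 := by
      linear_combination hv0r - 2*x1*hA1 - 2*z1*hB1 - z1*hb' + 2*u1*hA2
    exact mul_left_cancel₀ h2lam hg
  have hv1 : -dd*x1 + A2*y1 + C1*z1 = 0 := by
    have hg : (2*lam) * (-dd*x1 + A2*y1 + C1*z1) = (2*lam) * 0 := by
      linear_combination hv1r + x1*hb' - 2*y1*hA2 - 2*z1*hC1
    exact mul_left_cancel₀ h2lam hg
  have hv2 : A1*y1 + C2*z1 - dd*u1 = 0 := by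
    have hg : (2*lam) * (A1*y1 + C2*z1 - dd*u1) = (2*lam) * 0 := by
      linear_combination hv2r - 2*y1*hA1 - 2*z1*hC2 + u1*hb'
    exact mul_left_cancel₀ h2lam hg
  have hv3 : -C2*x1 + (B1 + dd)*y1 + C1*u1 = 0 := by
    have hg : (2*lam) * (-C2*x1 + (B1 + dd)*y1 + C1*u1) = (2*lam) * 0 := by
      linear_combination hv3r + 2*x1*hC2 - 2*y1*hB1 - y1*hb' - 2*u1*hC1
    exact mul_left_cancel₀ h2lam hg
  have hw0 : A1*x2 + (B1 + dd)*z2 - A2*u2 = 0 := by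
    have hg : (2*lam) * (A1*x2 + (B1 + dd)*z2 - A2*u2) = (2*lam) * 0 := by
      linear_combination hw0r - 2*x2*hA1 - 2*z2*hB1 - z2*hb' + 2*u2*hA2
    exact mul_left_cancel₀ h2lam hg
  have hw1 : -dd*x2 + A2*y2 + C1*z2 = 0 := by
    have hg : (2*lam) * (-dd*x2 + A2*y2 + C1*z2) = (2*lam) * 0 := by
      linear_combination hw1r + x2*hb' - 2*y2*hA2 - 2*z2*hC1
    exact mul_left_cancel₀ h2lam hg
  have hw2 : A1*y2 + C2*z2 - dd*u2 = 0 := by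
    have hg : (2*lam) * (A1*y2 + C2*z2 - dd*u2) = (2*lam) * 0 := by
      linear_combination hw2r - 2*y2*hA1 - 2*z2*hC2 + u2*hb'
    exact mul_left_cancel₀ h2lam hg
  have hw3 : -C2*x2 + (B1 + dd)*y2 + C1*u2 = 0 := by
    have hg : (2*lam) * (-C2*x2 + (B1 + dd)*y2 + C1*u2) = (2*lam) * 0 := by
      linear_combination hw3r + 2*x2*hC2 - 2*y2*hB1 - y2*hb' - 2*u2*hC1
    exact mul_left_cancel₀ h2lam hg
  have hDfac : b^2 - 4*a*c = lam^2 * (B1^2 - 4*A1*C1) := by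
    rw [hA1, hB1, hC1]; ring
  have hD0 : (B1^2 - 4*A1*C1) ≠ 0 := by
    intro h
    apply hP
    rw [hDfac, h, mul_zero]
  have hD4 : (4 * (B1^2 - 4*A1*C1) : ℤ) ≠ 0 := mul_ne_zero (by norm_num) hD0
  have e01 : 4 * (B1^2 - 4*A1*C1) * ((x1*y2 - y1*x2) * A2 - (x1*z2 - z1*x2) * (-C1)) = 0 := by
    linear_combination (-16*C1*dd*x2 - 4*B1*C1*x2) * hv0 + (16*C1*dd*x1 + 4*B1*C1*x1) * hw0 + (-4*B1*A2*x2) * hv3 + (4*B1*A2*x1) * hw3 + (16*C1*z1*x2 - 16*C1*x1*z2) * hRq + (4*B1*dd*x2) * hv1 + (-4*B1*dd*x1) * hw1 + (16*C1*A2*x2) * hv2 + (-16*C1*A2*x1) * hw2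
  have e02 : 4 * (B1^2 - 4*A1*C1) * ((x1*y2 - y1*x2) * (B1 + dd) - (x1*u2 - u1*x2) * (-C1)) = 0 := by
    linear_combination (-16*C1*C2*x2) * hv0 + (16*C1*C2*x1) * hw0 + (-4*B1*dd*x2 - 4*B1*B1*x2) * hv3 + (4*B1*dd*x1 + 4*B1*B1*x1) * hw3 + (16*C1*u1*x2 - 16*C1*x1*u2 + 4*B1*y1*x2 - 4*B1*x1*y2) * hRq + (4*B1*C2*x2) * hv1 + (-4*B1*C2*x1) * hw1 + (16*C1*dd*x2 + 12*B1*C1*x2) * hv2 + (-16*C1*dd*x1 - 12*B1*C1*x1) * hw2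
  have e03 : 4 * (B1^2 - 4*A1*C1) * ((x1*y2 - y1*x2) * dd - (y1*z2 - z1*y2) * (-C1)) = 0 := by
    linear_combination (-16*C1*dd*y2 - 4*B1*C1*y2) * hv0 + (16*C1*dd*y1 + 4*B1*C1*y1) * hw0 + (-4*B1*A2*y2) * hv3 + (4*B1*A2*y1) * hw3 + (16*C1*z1*y2 - 16*C1*y1*z2 - 4*B1*y1*x2 + 4*B1*x1*y2) * hRq + (4*B1*dd*y2) * hv1 + (-4*B1*dd*y1) * hw1 + (16*C1*A2*y2) * hv2 + (-16*C1*A2*y1) * hw2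
  have e04 : 4 * (B1^2 - 4*A1*C1) * ((x1*y2 - y1*x2) * C2 - (y1*u2 - u1*y2) * (-C1)) = 0 := by
    linear_combination (-16*C1*C2*y2) * hv0 + (16*C1*C2*y1) * hw0 + (-4*B1*dd*y2 - 4*B1*B1*y2) * hv3 + (4*B1*dd*y1 + 4*B1*B1*y1) * hw3 + (16*C1*u1*y2 - 16*C1*y1*u2) * hRq + (4*B1*C2*y2) * hv1 + (-4*B1*C2*y1) * hw1 + (16*C1*dd*y2 + 12*B1*C1*y2) * hv2 + (-16*C1*dd*y1 - 12*B1*C1*y1) * hw2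
  have e05 : 4 * (B1^2 - 4*A1*C1) * ((x1*y2 - y1*x2) * (-A1) - (z1*u2 - u1*z2) * (-C1)) = 0 := by
    linear_combination (16*C1*dd*u2 - 16*C1*C2*z2 + 4*B1*C1*u2) * hv0 + (-16*C1*dd*u1 + 16*C1*C2*z1 - 4*B1*C1*u1) * hw0 + (4*A1*B1*x2) * hv3 + (-4*A1*B1*x1) * hw3 + (16*C1*u1*z2 - 16*C1*z1*u2) * hRq + (-4*B1*dd*u2 + 4*B1*C2*z2) * hv1 + (4*B1*dd*u1 - 4*B1*C2*z1) * hw1 + (-4*B1*dd*x2 + 4*B1*A2*y2 - 16*A1*C1*x2) * hv2 + (4*B1*dd*x1 - 4*B1*A2*y1 + 16*A1*C1*x1) * hw2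
  have e12 : 4 * (B1^2 - 4*A1*C1) * ((x1*z2 - z1*x2) * (B1 + dd) - (x1*u2 - u1*x2) * A2) = 0 := by
    linear_combination (-4*B1*dd*x2 - 4*B1*B1*x2 + 16*A1*C1*x2) * hv0 + (4*B1*dd*x1 + 4*B1*B1*x1 - 16*A1*C1*x1) * hw0 + (4*B1*z1*x2 - 4*B1*x1*z2) * hRq + (-4*A1*B1*x2) * hv1 + (4*A1*B1*x1) * hw1 + (4*B1*A2*x2) * hv2 + (-4*B1*A2*x1) * hw2
  have e13 : 4 * (B1^2 - 4*A1*C1) * ((x1*z2 - z1*x2) * dd - (y1*z2 - z1*y2) * A2) = 0 := by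
    linear_combination (-16*C1*dd*z2 - 4*B1*C1*z2) * hv0 + (16*C1*dd*z1 + 4*B1*C1*z1) * hw0 + (-4*B1*A2*z2) * hv3 + (4*B1*A2*z1) * hw3 + (-4*B1*z1*x2 + 4*B1*x1*z2) * hRq + (4*B1*dd*z2) * hv1 + (-4*B1*dd*z1) * hw1 + (16*C1*A2*z2) * hv2 + (-16*C1*A2*z1) * hw2
  have e14 : 4 * (B1^2 - 4*A1*C1) * ((x1*z2 - z1*x2) * C2 - (y1*u2 - u1*y2) * A2) = 0 := by
    linear_combination (-16*C1*dd*u2 - 4*B1*dd*y2 - 4*B1*C1*u2 - 4*B1*B1*y2 + 16*A1*C1*y2) * hv0 + (16*C1*dd*u1 + 4*B1*dd*y1 + 4*B1*C1*u1 + 4*B1*B1*y1 - 16*A1*C1*y1) * hw0 + (-4*B1*dd*z2 - 4*B1*B1*z2 - 4*A1*B1*x2) * hv3 + (4*B1*dd*z1 + 4*B1*B1*z1 + 4*A1*B1*x1) * hw3 + (4*B1*dd*u2 - 4*A1*B1*y2) * hv1 + (-4*B1*dd*u1 + 4*A1*B1*y1) * hw1 + (16*C1*dd*z2 + 4*B1*dd*x2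 + 12*B1*C1*z2 + 16*A1*C1*x2) * hv2 + (-16*C1*dd*z1 - 4*B1*dd*x1 - 12*B1*C1*z1 - 16*A1*C1*x1) * hw2
  have e15 : 4 * (B1^2 - 4*A1*C1) * ((x1*z2 - z1*x2) * (-A1) - (z1*u2 - u1*z2) * A2) = 0 := by
    linear_combination (-4*B1*dd*z2 - 4*B1*B1*z2 + 16*A1*C1*z2) * hv0 + (4*B1*dd*z1 + 4*B1*B1*z1 - 16*A1*C1*z1) * hw0 + (-4*A1*B1*z2) * hv1 + (4*A1*B1*z1) * hw1 + (4*B1*A2*z2) * hv2 + (-4*B1*A2*z1) * hw2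
  have e23 : 4 * (B1^2 - 4*A1*C1) * ((x1*u2 - u1*x2) * dd - (y1*z2 - z1*y2) * (B1 + dd)) = 0 := by
    linear_combination (-16*C1*dd*u2 + 4*B1*C2*x2 - 4*B1*C1*u2) * hv0 + (16*C1*dd*u1 - 4*B1*C2*x1 + 4*B1*C1*u1) * hw0 + (-4*B1*dd*z2 - 4*B1*B1*z2) * hv3 + (4*B1*dd*z1 + 4*B1*B1*z1) * hw3 + (-4*B1*u1*x2 - 4*B1*z1*y2 + 4*B1*y1*z2 + 4*B1*x1*u2) * hRq + (4*B1*dd*u2) * hv1 + (-4*B1*dd*u1) * hw1 + (16*C1*dd*z2 - 4*B1*A2*y2 + 12*B1*C1*z2) * hv2 + (-16*C1*dd*z1 + 4*B1*A2*y1 - 12*B1*C1*z1) * hw2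
  have e24 : 4 * (B1^2 - 4*A1*C1) * ((x1*u2 - u1*x2) * C2 - (y1*u2 - u1*y2) * (B1 + dd)) = 0 := by
    linear_combination (-16*C1*C2*u2) * hv0 + (16*C1*C2*u1) * hw0 + (-4*B1*dd*u2 - 4*B1*B1*u2) * hv3 + (4*B1*dd*u1 + 4*B1*B1*u1) * hw3 + (-4*B1*u1*y2 + 4*B1*y1*u2) * hRq + (4*B1*C2*u2) * hv1 + (-4*B1*C2*u1) * hw1 + (16*C1*dd*u2 + 12*B1*C1*u2) * hv2 + (-16*C1*dd*u1 - 12*B1*C1*u1) * hw2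
  have e25 : 4 * (B1^2 - 4*A1*C1) * ((x1*u2 - u1*x2) * (-A1) - (z1*u2 - u1*z2) * (B1 + dd)) = 0 := by
    linear_combination (-4*B1*dd*u2 - 4*B1*B1*u2 + 16*A1*C1*u2) * hv0 + (4*B1*dd*u1 + 4*B1*B1*u1 - 16*A1*C1*u1) * hw0 + (-4*B1*u1*z2 + 4*B1*z1*u2) * hRq + (-4*A1*B1*u2) * hv1 + (4*A1*B1*u1) * hw1 + (4*B1*A2*u2) * hv2 + (-4*B1*A2*u1) * hw2
  have e34 : 4 * (B1^2 - 4*A1*C1) * ((y1*z2 - z1*y2) * C2 - (y1*u2 - u1*y2) * dd) = 0 := by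
    linear_combination (-4*B1*C2*y2) * hv0 + (4*B1*C2*y1) * hw0 + (-4*A1*B1*y2) * hv3 + (4*A1*B1*y1) * hw3 + (4*B1*u1*y2 - 4*B1*y1*u2) * hRq + (4*B1*dd*y2 + 16*A1*C1*y2) * hv2 + (-4*B1*dd*y1 - 16*A1*C1*y1) * hw2
  have e35 : 4 * (B1^2 - 4*A1*C1) * ((y1*z2 - z1*y2) * (-A1) - (z1*u2 - u1*z2) * dd) = 0 := by
    linear_combination (-4*B1*C2*z2) * hv0 + (4*B1*C2*z1) * hw0 + (-4*A1*B1*z2) * hv3 + (4*A1*B1*z1) * hw3 + (4*B1*u1*z2 - 4*B1*z1*u2) * hRq + (4*B1*dd*z2 + 16*A1*C1*z2) * hv2 + (-4*B1*dd*z1 - 16*A1*C1*z1) * hw2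
  have e45 : 4 * (B1^2 - 4*A1*C1) * ((y1*u2 - u1*y2) * (-A1) - (z1*u2 - u1*z2) * C2) = 0 := by
    linear_combination (-4*B1*C2*u2) * hv0 + (4*B1*C2*u1) * hw0 + (-4*A1*B1*u2) * hv3 + (4*A1*B1*u1) * hw3 + (4*B1*dd*u2 + 16*A1*C1*u2) * hv2 + (-4*B1*dd*u1 - 16*A1*C1*u1) * hw2
  have hE01 : (x1*y2 - y1*x2) * A2 - (x1*z2 - z1*x2) * (-C1) = 0 :=
    mul_left_cancel₀ hD4 (by linear_combination e01)
  have hE02 : (x1*y2 - y1*x2) * (B1 + dd) - (x1*u2 - u1*x2) * (-C1) = 0 :=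
    mul_left_cancel₀ hD4 (by linear_combination e02)
  have hE03 : (x1*y2 - y1*x2) * dd - (y1*z2 - z1*y2) * (-C1) = 0 :=
    mul_left_cancel₀ hD4 (by linear_combination e03)
  have hE04 : (x1*y2 - y1*x2) * C2 - (y1*u2 - u1*y2) * (-C1) = 0 :=
    mul_left_cancel₀ hD4 (by linear_combination e04)
  have hE05 : (x1*y2 - y1*x2) * (-A1) - (z1*u2 - u1*z2) * (-C1) = 0 :=
    mul_left_cancel₀ hD4 (by linear_combination e05)
  have hE12 : (x1*z2 - z1*x2) * (B1 + dd) - (x1*u2 - u1*x2) * A2 = 0 :=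
    mul_left_cancel₀ hD4 (by linear_combination e12)
  have hE13 : (x1*z2 - z1*x2) * dd - (y1*z2 - z1*y2) * A2 = 0 :=
    mul_left_cancel₀ hD4 (by linear_combination e13)
  have hE14 : (x1*z2 - z1*x2) * C2 - (y1*u2 - u1*y2) * A2 = 0 :=
    mul_left_cancel₀ hD4 (by linear_combination e14)
  have hE15 : (x1*z2 - z1*x2) * (-A1) - (z1*u2 - u1*z2) * A2 = 0 :=
    mul_left_cancel₀ hD4 (by linear_combination e15)
  have hE23 : (x1*u2 - u1*x2) * dd - (y1*z2 - z1*y2) * (B1 + dd) = 0 :=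
    mul_left_cancel₀ hD4 (by linear_combination e23)
  have hE24 : (x1*u2 - u1*x2) * C2 - (y1*u2 - u1*y2) * (B1 + dd) = 0 :=
    mul_left_cancel₀ hD4 (by linear_combination e24)
  have hE25 : (x1*u2 - u1*x2) * (-A1) - (z1*u2 - u1*z2) * (B1 + dd) = 0 :=
    mul_left_cancel₀ hD4 (by linear_combination e25)
  have hE34 : (y1*z2 - z1*y2) * C2 - (y1*u2 - u1*y2) * dd = 0 :=
    mul_left_cancel₀ hD4 (by linear_combination e34)
  have hE35 : (y1*z2 - z1*y2) * (-A1) - (z1*u2 - u1*z2) * dd = 0 :=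
    mul_left_cancel₀ hD4 (by linear_combination e35)
  have hE45 : (y1*u2 - u1*y2) * (-A1) - (z1*u2 - u1*z2) * C2 = 0 :=
    mul_left_cancel₀ hD4 (by linear_combination e45)
  obtain ⟨ee1, ee2, ee3, ee4, ee5, ee6, hbez6⟩ := hbezex
  obtain ⟨tt, htt⟩ : ∃ tt : ℤ, tt = ((x1*y2 - y1*x2)*ee1 + (x1*z2 - z1*x2)*ee2 +
      (x1*u2 - u1*x2)*ee3 + (y1*z2 - z1*y2)*ee4 + (y1*u2 - u1*y2)*ee5 +
      (z1*u2 - u1*z2)*ee6) := ⟨_, rfl⟩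
  have hq0 : (x1*y2 - y1*x2) = tt * (-C1) := by
    linear_combination (-((x1*y2 - y1*x2))) * hbez6 + (-((-C1))) * htt + ee2 * hE01 + ee3 * hE02 + ee4 * hE03 + ee5 * hE04 + ee6 * hE05
  have hq1 : (x1*z2 - z1*x2) = tt * A2 := by
    linear_combination (-((x1*z2 - z1*x2))) * hbez6 + (-(A2)) * htt + (-ee1) * hE01 + ee3 * hE12 + ee4 * hE13 + ee5 * hE14 + ee6 * hE15
  have hq2 : (x1*u2 - u1*x2) = tt * (B1 + dd) := by
    linear_combination (-((x1*u2 - u1*x2))) * hbez6 + (-((B1 + dd))) * htt + (-ee1) * hE02 + (-ee2) * hE12 + ee4 * hE23 + ee5 * hE24 + ee6 * hE25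
  have hq3 : (y1*z2 - z1*y2) = tt * dd := by
    linear_combination (-((y1*z2 - z1*y2))) * hbez6 + (-(dd)) * htt + (-ee1) * hE03 + (-ee2) * hE13 + (-ee3) * hE23 + ee5 * hE34 + ee6 * hE35
  have hq4 : (y1*u2 - u1*y2) = tt * C2 := by
    linear_combination (-((y1*u2 - u1*y2))) * hbez6 + (-(C2)) * htt + (-ee1) * hE04 + (-ee2) * hE14 + (-ee3) * hE24 + (-ee4) * hE34 + ee6 * hE45
  have hq5 : (z1*u2 - u1*z2) = tt * (-A1) := by
    linear_combination (-((z1*u2 - u1*z2))) * hbez6 + (-((-A1))) * htt + (-ee1) * hE05 + (-ee2) * hE15 + (-ee3) * hE25 + (-ee4) * hE35 + (-ee5) * hE45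
  have noprime : ∀ ρ : ℤ, Prime ρ → ρ ∣ tt → False := by
    intro ρ hρ hρt
    have d0 : ρ ∣ (x1*y2 - y1*x2) := by rw [hq0]; exact hρt.mul_right _
    have d1 : ρ ∣ (x1*z2 - z1*x2) := by rw [hq1]; exact hρt.mul_right _
    have d2 : ρ ∣ (x1*u2 - u1*x2) := by rw [hq2]; exact hρt.mul_right _
    have d3 : ρ ∣ (y1*z2 - z1*y2) := by rw [hq3]; exact hρt.mul_right _
    have d4 : ρ ∣ (y1*u2 - u1*y2) := by rw [hq4]; exact hρt.mul_right _
    have d5 : ρ ∣ (z1*u2 - u1*z2) := by rw [hq5]; exact hρt.mul_right _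
    have con_case : ∀ β : ℤ, (∀ i j : Fin 2, ρ ∣ (w i j - β * v i j)) → False := by
      intro β hdiv
      have hYmem : (w - β • v) ∈ LambdaSet (formMatrix a b c) (formMatrix a' b' c') := by
        have h1 : v ∈ lambdaSub (formMatrix a b c) (formMatrix a' b' c') := hmem0
        have h2 : w ∈ lambdaSub (formMatrix a b c) (formMatrix a' b' c') := hmem1
        exact Submodule.sub_mem _ h2 (Submodule.smul_mem _ β h1)
      have hdY : ∀ i j : Fin 2, ρ ∣ (w - β • v) i j := by
        intro i j
        have he : (w - β • v) i j = w i j - β * v i j := by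
          simp only [Matrix.sub_apply, Matrix.smul_apply, smul_eq_mul]
        rw [he]; exact hdiv i j
      obtain ⟨Z, hZeq, hZmem⟩ := divide_mem _ _ _ hYmem ρ hρ.ne_zero hdY
      have hZspan : Z ∈ Submodule.span ℤ (LambdaSet (formMatrix a b c) (formMatrix a' b' c')) := by
        exact Submodule.subset_span hZmem
      obtain ⟨r0, r1, hrepr⟩ := repr_two _ bas Z hZspan
      rw [← hvdef, ← hwdef] at hrepr
      have h5 : w - β • v = (ρ*r0) • v + (ρ*r1) • w := by
        rw [hrepr, smul_add, smul_smul, smul_smul] at hZeq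
        exact hZeq
      have hfinal : (ρ*r0 + β) • v + (ρ*r1 - 1) • w = 0 := by
        have h6 : (ρ*r0 + β) • v + (ρ*r1 - 1) • w = ((ρ*r0) • v + (ρ*r1) • w) - (w - β • v) := by
          rw [add_smul, sub_smul, one_smul]; abel
        rw [h6, ← h5, sub_self]
      obtain ⟨-, hg1⟩ := pair_indep _ bas _ _ hfinal
      have hone : ρ * r1 = 1 := by linarith [sub_eq_zero.mp hg1]
      exact hρ.not_unit (IsUnit.of_mul_eq_one _ hone)
    have con_all : (∀ i j : Fin 2, ρ ∣ v i j) → False := by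
      intro hdiv
      have hvmem : v ∈ LambdaSet (formMatrix a b c) (formMatrix a' b' c') := hmem0
      obtain ⟨Z, hZeq, hZmem⟩ := divide_mem _ _ _ hvmem ρ hρ.ne_zero hdiv
      have hZspan : Z ∈ Submodule.span ℤ (LambdaSet (formMatrix a b c) (formMatrix a' b' c')) := by
        exact Submodule.subset_span hZmem
      obtain ⟨r0, r1, hrepr⟩ := repr_two _ bas Z hZspan
      rw [← hvdef, ← hwdef] at hrepr
      have h5 : v = (ρ*r0) • v + (ρ*r1) • w := by
        rw [hrepr, smul_add, smul_smul, smul_smul] at hZeq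
        exact hZeq
      have hfinal : (ρ*r0 - 1) • v + (ρ*r1) • w = 0 := by
        have h6 : (ρ*r0 - 1) • v + (ρ*r1) • w = ((ρ*r0) • v + (ρ*r1) • w) - v := by
          rw [sub_smul, one_smul]; abel
        rw [h6, ← h5, sub_self]
      obtain ⟨hg0, -⟩ := pair_indep _ bas _ _ hfinal
      have hone : ρ * r0 = 1 := by linarith [sub_eq_zero.mp hg0]
      exact hρ.not_unit (IsUnit.of_mul_eq_one _ hone)
    by_cases hnd0 : ρ ∣ x1
    case neg =>
      have hcop : IsCoprime ρ x1 := (Prime.coprime_iff_not_dvd hρ).mpr hnd0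
      obtain ⟨κ, μ, hbezρ⟩ := hcop
      have hdn0 : ρ ∣ (x2 - (μ * x2) * x1) := ⟨κ * x2, by linear_combination (-(x2)) * hbezρ⟩
      obtain ⟨s1, hs1⟩ := d0
      have hdn1 : ρ ∣ (y2 - (μ * x2) * y1) := ⟨κ * y2 + (μ) * s1, by linear_combination (-(y2)) * hbezρ + (μ) * hs1⟩
      obtain ⟨s2, hs2⟩ := d1
      have hdn2 : ρ ∣ (z2 - (μ * x2) * z1) := ⟨κ * z2 + (μ) * s2, by linear_combination (-(z2)) * hbezρ + (μ) * hs2⟩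
      obtain ⟨s3, hs3⟩ := d2
      have hdn3 : ρ ∣ (u2 - (μ * x2) * u1) := ⟨κ * u2 + (μ) * s3, by linear_combination (-(u2)) * hbezρ + (μ) * hs3⟩
      apply con_case (μ * x2)
      intro i j
      fin_cases i <;> fin_cases j
      · show ρ ∣ w 0 0 - (μ * x2) * v 0 0
        rw [← hx2def, ← hx1def]
        exact hdn0
      · show ρ ∣ w 0 1 - (μ * x2) * v 0 1
        rw [← hy2def, ← hy1def]
        exact hdn1
      · show ρ ∣ w 1 0 - (μ * x2) * v 1 0
        rw [← hz2def, ← hz1def]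
        exact hdn2
      · show ρ ∣ w 1 1 - (μ * x2) * v 1 1
        rw [← hu2def, ← hu1def]
        exact hdn3
    by_cases hnd1 : ρ ∣ y1
    case neg =>
      have hcop : IsCoprime ρ y1 := (Prime.coprime_iff_not_dvd hρ).mpr hnd1
      obtain ⟨κ, μ, hbezρ⟩ := hcop
      obtain ⟨s0, hs0⟩ := d0
      have hdn0 : ρ ∣ (x2 - (μ * y2) * x1) := ⟨κ * x2 + (-μ) * s0, by linear_combination (-(x2)) * hbezρ + (-μ) * hs0⟩
      have hdn1 : ρ ∣ (y2 - (μ * y2) * y1) := ⟨κ * y2, by linear_combination (-(y2)) * hbezρ⟩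
      obtain ⟨s2, hs2⟩ := d3
      have hdn2 : ρ ∣ (z2 - (μ * y2) * z1) := ⟨κ * z2 + (μ) * s2, by linear_combination (-(z2)) * hbezρ + (μ) * hs2⟩
      obtain ⟨s3, hs3⟩ := d4
      have hdn3 : ρ ∣ (u2 - (μ * y2) * u1) := ⟨κ * u2 + (μ) * s3, by linear_combination (-(u2)) * hbezρ + (μ) * hs3⟩
      apply con_case (μ * y2)
      intro i j
      fin_cases i <;> fin_cases j
      · show ρ ∣ w 0 0 - (μ * y2) * v 0 0
        rw [← hx2def, ← hx1def]
        exact hdn0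
      · show ρ ∣ w 0 1 - (μ * y2) * v 0 1
        rw [← hy2def, ← hy1def]
        exact hdn1
      · show ρ ∣ w 1 0 - (μ * y2) * v 1 0
        rw [← hz2def, ← hz1def]
        exact hdn2
      · show ρ ∣ w 1 1 - (μ * y2) * v 1 1
        rw [← hu2def, ← hu1def]
        exact hdn3
    by_cases hnd2 : ρ ∣ z1
    case neg =>
      have hcop : IsCoprime ρ z1 := (Prime.coprime_iff_not_dvd hρ).mpr hnd2
      obtain ⟨κ, μ, hbezρ⟩ := hcop
      obtain ⟨s0, hs0⟩ := d1
      have hdn0 : ρ ∣ (x2 - (μ * z2) * x1) := ⟨κ * x2 + (-μ) * s0, by linear_combination (-(x2)) * hbezρ + (-μ) * hs0⟩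
      obtain ⟨s1, hs1⟩ := d3
      have hdn1 : ρ ∣ (y2 - (μ * z2) * y1) := ⟨κ * y2 + (-μ) * s1, by linear_combination (-(y2)) * hbezρ + (-μ) * hs1⟩
      have hdn2 : ρ ∣ (z2 - (μ * z2) * z1) := ⟨κ * z2, by linear_combination (-(z2)) * hbezρ⟩
      obtain ⟨s3, hs3⟩ := d5
      have hdn3 : ρ ∣ (u2 - (μ * z2) * u1) := ⟨κ * u2 + (μ) * s3, by linear_combination (-(u2)) * hbezρ + (μ) * hs3⟩
      apply con_case (μ * z2)
      intro i j
      fin_cases i <;> fin_cases j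
      · show ρ ∣ w 0 0 - (μ * z2) * v 0 0
        rw [← hx2def, ← hx1def]
        exact hdn0
      · show ρ ∣ w 0 1 - (μ * z2) * v 0 1
        rw [← hy2def, ← hy1def]
        exact hdn1
      · show ρ ∣ w 1 0 - (μ * z2) * v 1 0
        rw [← hz2def, ← hz1def]
        exact hdn2
      · show ρ ∣ w 1 1 - (μ * z2) * v 1 1
        rw [← hu2def, ← hu1def]
        exact hdn3
    by_cases hnd3 : ρ ∣ u1
    case neg =>
      have hcop : IsCoprime ρ u1 := (Prime.coprime_iff_not_dvd hρ).mpr hnd3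
      obtain ⟨κ, μ, hbezρ⟩ := hcop
      obtain ⟨s0, hs0⟩ := d2
      have hdn0 : ρ ∣ (x2 - (μ * u2) * x1) := ⟨κ * x2 + (-μ) * s0, by linear_combination (-(x2)) * hbezρ + (-μ) * hs0⟩
      obtain ⟨s1, hs1⟩ := d4
      have hdn1 : ρ ∣ (y2 - (μ * u2) * y1) := ⟨κ * y2 + (-μ) * s1, by linear_combination (-(y2)) * hbezρ + (-μ) * hs1⟩
      obtain ⟨s2, hs2⟩ := d5
      have hdn2 : ρ ∣ (z2 - (μ * u2) * z1) := ⟨κ * z2 + (-μ) * s2, by linear_combination (-(z2)) * hbezρ + (-μ) * hs2⟩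
      have hdn3 : ρ ∣ (u2 - (μ * u2) * u1) := ⟨κ * u2, by linear_combination (-(u2)) * hbezρ⟩
      apply con_case (μ * u2)
      intro i j
      fin_cases i <;> fin_cases j
      · show ρ ∣ w 0 0 - (μ * u2) * v 0 0
        rw [← hx2def, ← hx1def]
        exact hdn0
      · show ρ ∣ w 0 1 - (μ * u2) * v 0 1
        rw [← hy2def, ← hy1def]
        exact hdn1
      · show ρ ∣ w 1 0 - (μ * u2) * v 1 0
        rw [← hz2def, ← hz1def]
        exact hdn2
      · show ρ ∣ w 1 1 - (μ * u2) * v 1 1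
        rw [← hu2def, ← hu1def]
        exact hdn3
    apply con_all
    intro i j
    fin_cases i <;> fin_cases j
    · show ρ ∣ v 0 0
      rw [← hx1def]
      exact hnd0
    · show ρ ∣ v 0 1
      rw [← hy1def]
      exact hnd1
    · show ρ ∣ v 1 0
      rw [← hz1def]
      exact hnd2
    · show ρ ∣ v 1 1
      rw [← hu1def]
      exact hnd3
  have habs : tt.natAbs = 1 := by
    by_contra hne1
    obtain ⟨ρn, hρn, hdvd⟩ := Nat.exists_prime_and_dvd hne1
    exact noprime ρn (Nat.prime_iff_prime_int.mp hρn)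
      (Int.dvd_natAbs.mp (Int.natCast_dvd_natCast.mpr hdvd))
  have ht2 : tt * tt = 1 := by
    rcases Int.natAbs_eq_iff.mp habs with h | h <;> rw [h] <;> norm_num
  rw [hDfac, Int.mul_ediv_cancel_left _ (pow_ne_zero 2 hlam0)]
  linear_combination (-2*tt*(-A1)) * hq0 + (-2*((x1*y2 - y1*x2))) * hq5 + (-2*tt*C2) * hq1 + (-2*((x1*z2 - z1*x2))) * hq4 + (((x1*u2 - u1*x2)) + tt*(B1 + dd)) * hq2 + (((y1*z2 - z1*y2)) + tt*dd) * hq3 + (-(2*(-C1)*(-A1) + 2*A2*C2 - (B1 + dd)^2 - dd^2)) * ht2 + 2 * hRq
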